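/- Let Λ ≅ ℤⁿ be a lattice in ℝⁿ, T = ℝⁿ/Λ, and ℓ(x) = √⟨x, Ax⟩ for A symmetric positive definite. Let q_*ℓ(x+Λ) := inf_{λ∈Λ} ℓ(x+λ) be the quotient length on T. Then for any k ∈ ℝⁿ with ⟨Λ, k⟩ ⊆ 2πℤ (so that φ_k(x+Λ) = e^{i⟨x,k⟩} is a well-defined character of T), the dual length satisfies: sup over x+Λ with q_*ℓ(x+Λ)≠0 of ℓ^{arc}(e^{i⟨x,k⟩})/q_*ℓ(x+Λ) = sup over y ∈ ℝⁿ, y ≠ 0 of ℓ^{arc}(e^{i⟨y,k⟩})/ℓ(y) = √⟨k, A⁻¹k⟩. -/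

import Mathlib

open Matrix

/-- arclength distance from `1` to `e^{iθ}` on the unit circle. -/
noncomputable def larc (θ : ℝ) : ℝ := ⨅ k : ℤ, |θ + 2 * Real.pi * k|

lemma larc_bddBelow (θ : ℝ) : BddBelow (Set.range fun m : ℤ => |θ + 2 * Real.pi * m|) :=
  ⟨0, by rintro x ⟨m, rfl⟩; exact abs_nonneg _⟩

lemma larc_nonneg (θ : ℝ) : 0 ≤ larc θ :=
  le_ciInf fun _ => abs_nonneg _

lemma larc_le (θ : ℝ) (m : ℤ) : larc θ ≤ |θ + 2 * Real.pi * m| :=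
  ciInf_le (larc_bddBelow θ) m

lemma larc_le_abs (θ : ℝ) : larc θ ≤ |θ| := by
  simpa using larc_le θ 0

lemma larc_add (θ : ℝ) (m : ℤ) : larc (θ + 2 * Real.pi * m) = larc θ := by
  have key : ∀ (ψ : ℝ) (j : ℤ), larc (ψ + 2 * Real.pi * j) ≤ larc ψ := by
    intro ψ j
    refine le_ciInf fun i => ?_
    calc larc (ψ + 2 * Real.pi * j)
        ≤ |ψ + 2 * Real.pi * j + 2 * Real.pi * ((i - j : ℤ) : ℝ)| := larc_le _ (i - j)
      _ = |ψ + 2 * Real.pi * i| := by push_cast; ring_nf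
  refine le_antisymm (key θ m) ?_
  have := key (θ + 2 * Real.pi * m) (-m)
  simpa using this

lemma larc_eq_abs {θ : ℝ} (h : |θ| ≤ Real.pi) : larc θ = |θ| := by
  refine le_antisymm (larc_le_abs θ) (le_ciInf fun m => ?_)
  rcases eq_or_ne m 0 with rfl | hm
  · simp
  · have h1 : (1:ℝ) ≤ |(m:ℝ)| := by
      have : (1:ℤ) ≤ |m| := Int.one_le_abs hm
      calc (1:ℝ) = ((1:ℤ) : ℝ) := by norm_num
        _ ≤ ((|m| : ℤ) : ℝ) := by exact_mod_cast this
        _ = |(m:ℝ)| := by push_cast; ring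
    have h2 : 2 * Real.pi ≤ |2 * Real.pi * m| := by
      rw [abs_mul, abs_of_pos (by positivity : (0:ℝ) < 2 * Real.pi)]
      nlinarith [Real.pi_pos]
    have h3 : |2 * Real.pi * (m:ℝ)| ≤ |θ + 2 * Real.pi * m| + |θ| := by
      have h4 := abs_add_le (θ + 2 * Real.pi * (m:ℝ)) (-θ)
      rw [abs_neg] at h4
      have h5 : θ + 2 * Real.pi * (m:ℝ) + -θ = 2 * Real.pi * m := by ring
      rw [h5] at h4
      exact h4
    linarith [Real.pi_pos]

lemma larc_zero : larc 0 = 0 :=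
  le_antisymm (by simpa using larc_le_abs 0) (larc_nonneg 0)

lemma real_iSup_zero {ι : Sort*} (f : ι → ℝ) (h : ∀ i, f i = 0) : (⨆ i, f i) = 0 := by
  rcases isEmpty_or_nonempty ι with hι | hι
  · exact Real.iSup_of_isEmpty f
  · calc (⨆ i, f i) = ⨆ _ : ι, (0:ℝ) := iSup_congr h
      _ = 0 := ciSup_const

lemma cs_lemma {n : ℕ} (A : Matrix (Fin n) (Fin n) ℝ) (hA : A.PosDef) (y k : Fin n → ℝ) :
    (y ⬝ᵥ k)^2 ≤ (y ⬝ᵥ A.mulVec y) * (k ⬝ᵥ A⁻¹.mulVec k) := by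
  have hdet : IsUnit A.det := hA.det_pos.ne'.isUnit
  set z := A⁻¹.mulVec k with hz
  have hAz : A.mulVec z = k := by
    rw [hz, mulVec_mulVec, Matrix.mul_nonsing_inv A hdet, one_mulVec]
  have hAT : Aᵀ = A := by
    rw [← conjTranspose_eq_transpose_of_trivial]; exact hA.isHermitian
  have hsym : ∀ u v : Fin n → ℝ, u ⬝ᵥ A.mulVec v = v ⬝ᵥ A.mulVec u := by
    intro u v
    rw [dotProduct_mulVec, ← mulVec_transpose, hAT, dotProduct_comm]
  have hkz : k ⬝ᵥ z = z ⬝ᵥ A.mulVec z := by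
    conv_lhs => rw [← hAz]
    rw [dotProduct_comm]
  have hyk : y ⬝ᵥ k = y ⬝ᵥ A.mulVec z := by rw [hAz]
  -- quadratic nonneg
  have hq : ∀ t : ℝ, 0 ≤ (z ⬝ᵥ A.mulVec z) * (t * t) + (2 * (y ⬝ᵥ A.mulVec z)) * t
      + (y ⬝ᵥ A.mulVec y) := by
    intro t
    have h0 := hA.posSemidef.dotProduct_mulVec_nonneg (y + t • z)
    rw [star_trivial] at h0
    have expand : (y + t • z) ⬝ᵥ A.mulVec (y + t • z)
        = (y ⬝ᵥ A.mulVec y) + t * (y ⬝ᵥ A.mulVec z) + t * (z ⬝ᵥ A.mulVec y)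
          + t * t * (z ⬝ᵥ A.mulVec z) := by
      simp only [mulVec_add, mulVec_smul, dotProduct_add, add_dotProduct, smul_dotProduct,
        dotProduct_smul, smul_eq_mul]
      ring
    rw [expand, hsym z y] at h0
    linarith
  have hd := discrim_le_zero hq
  rw [discrim] at hd
  rw [hyk, hkz]
  nlinarith [hd]

/-- for a torus `T = ℝⁿ/Λ` with quotient length `q_*ℓ` of
`ℓ(x) = √⟨x,Ax⟩`, and a character `φ_k` of `T` (i.e. `⟨Λ,k⟩ ⊆ 2πℤ`), the dual length of
`φ_k` computed on the torus equals the one computed on `ℝⁿ`, which is `√⟨k,A⁻¹k⟩`. -/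
theorem pontryagin_dual_length_torus {n : ℕ}
    (A : Matrix (Fin n) (Fin n) ℝ) (hA : A.PosDef)
    (Λ : AddSubgroup (Fin n → ℝ)) (b : Module.Basis (Fin n) ℝ (Fin n → ℝ))
    (hΛ : Λ = AddSubgroup.closure (Set.range ⇑b))
    (k : Fin n → ℝ) (hk : ∀ l ∈ Λ, ∃ m : ℤ, l ⬝ᵥ k = 2 * Real.pi * m) :
    let ℓ : (Fin n → ℝ) → ℝ := fun x => Real.sqrt (x ⬝ᵥ A.mulVec x)
    let ql : (Fin n → ℝ) → ℝ := fun x => ⨅ l : Λ, ℓ (x + (l : Fin n → ℝ))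
    (⨆ x : {x : Fin n → ℝ // ql x ≠ 0},
        larc ((x : Fin n → ℝ) ⬝ᵥ k) / ql (x : Fin n → ℝ)) =
      (⨆ y : {y : Fin n → ℝ // y ≠ 0},
        larc ((y : Fin n → ℝ) ⬝ᵥ k) / ℓ (y : Fin n → ℝ)) ∧
    (⨆ y : {y : Fin n → ℝ // y ≠ 0},
        larc ((y : Fin n → ℝ) ⬝ᵥ k) / ℓ (y : Fin n → ℝ)) =
      Real.sqrt (k ⬝ᵥ A⁻¹.mulVec k) := by
  intro ℓ ql
  rcases eq_or_ne k 0 with rfl | hk0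
  · -- k = 0 : everything is zero
    have hD : Real.sqrt ((0 : Fin n → ℝ) ⬝ᵥ A⁻¹.mulVec 0) = 0 := by
      simp
    have h1 : (⨆ x : {x : Fin n → ℝ // ql x ≠ 0},
        larc ((x : Fin n → ℝ) ⬝ᵥ (0 : Fin n → ℝ)) / ql (x : Fin n → ℝ)) = 0 :=
      real_iSup_zero _ fun x => by simp [larc_zero]
    have h2 : (⨆ y : {y : Fin n → ℝ // y ≠ 0},
        larc ((y : Fin n → ℝ) ⬝ᵥ (0 : Fin n → ℝ)) / ℓ (y : Fin n → ℝ)) = 0 :=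
      real_iSup_zero _ fun y => by simp [larc_zero]
    rw [h1, h2, hD]; exact ⟨rfl, rfl⟩
  · -- k ≠ 0
    have hdet : IsUnit A.det := hA.det_pos.ne'.isUnit
    set D2 : ℝ := k ⬝ᵥ A⁻¹.mulVec k with hD2def
    have hD2pos : 0 < D2 := by
      have := hA.inv.dotProduct_mulVec_pos hk0
      rwa [star_trivial] at this
    set D : ℝ := Real.sqrt D2 with hDdef
    have hDpos : 0 < D := Real.sqrt_pos.mpr hD2pos
    have hDsq : D ^ 2 = D2 := Real.sq_sqrt hD2pos.le
    set z : Fin n → ℝ := A⁻¹.mulVec k with hz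
    have hAz : A.mulVec z = k := by
      rw [hz, mulVec_mulVec, Matrix.mul_nonsing_inv A hdet, one_mulVec]
    have hzk : z ⬝ᵥ k = D2 := by rw [dotProduct_comm, hD2def, hz]
    have hzAz : z ⬝ᵥ A.mulVec z = D2 := by rw [hAz, hzk]
    -- Cauchy-Schwarz in sqrt form
    have hCS : ∀ y : Fin n → ℝ, |y ⬝ᵥ k| ≤ ℓ y * D := by
      intro y
      have h := cs_lemma A hA y k
      have hy0 : 0 ≤ y ⬝ᵥ A.mulVec y := by
        have := hA.posSemidef.dotProduct_mulVec_nonneg y; rwa [star_trivial] at this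
      calc |y ⬝ᵥ k| = Real.sqrt ((y ⬝ᵥ k)^2) := (Real.sqrt_sq_eq_abs _).symm
        _ ≤ Real.sqrt ((y ⬝ᵥ A.mulVec y) * D2) := Real.sqrt_le_sqrt h
        _ = ℓ y * D := by rw [Real.sqrt_mul hy0]
    have hℓpos : ∀ y : Fin n → ℝ, y ≠ 0 → 0 < ℓ y := by
      intro y hy
      have := hA.dotProduct_mulVec_pos hy
      rw [star_trivial] at this
      exact Real.sqrt_pos.mpr this
    -- the witness
    set t : ℝ := Real.pi / D2 with ht
    have htpos : 0 < t := div_pos Real.pi_pos hD2pos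
    set x₀ : Fin n → ℝ := t • z with hx₀
    have hx₀k : x₀ ⬝ᵥ k = Real.pi := by
      rw [hx₀, smul_dotProduct, hzk, smul_eq_mul, ht, div_mul_cancel₀ _ hD2pos.ne']
    have hℓx₀ : ℓ x₀ = t * D := by
      show Real.sqrt (x₀ ⬝ᵥ A.mulVec x₀) = t * D
      rw [hx₀, mulVec_smul, smul_dotProduct, dotProduct_smul, hzAz, smul_eq_mul, smul_eq_mul,
        show t * (t * D2) = t^2 * D2 by ring, Real.sqrt_mul (sq_nonneg t),
        Real.sqrt_sq htpos.le]
    have htD : t * D = Real.pi / D := by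
      rw [ht, div_mul_eq_mul_div, div_eq_div_iff hD2pos.ne' hDpos.ne']
      linear_combination Real.pi * hDsq
    have hx₀ne : x₀ ≠ 0 := by
      intro h
      have : ℓ x₀ = 0 := by rw [h]; show Real.sqrt _ = 0; simp
      rw [hℓx₀] at this
      nlinarith
    have hlarcπ : larc (x₀ ⬝ᵥ k) = Real.pi := by
      rw [hx₀k, larc_eq_abs (le_of_eq (abs_of_pos Real.pi_pos)),
        abs_of_pos Real.pi_pos]
    have hπ : Real.pi ≠ 0 := Real.pi_pos.ne'
    have hratio : Real.pi / (t * D) = D := by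
      rw [htD]
      field_simp
    -- ℝⁿ side
    have hub2 : ∀ y : {y : Fin n → ℝ // y ≠ 0},
        larc ((y : Fin n → ℝ) ⬝ᵥ k) / ℓ (y : Fin n → ℝ) ≤ D := by
      rintro ⟨y, hy⟩
      have hp := hℓpos y hy
      rw [div_le_iff₀ hp]
      calc larc (y ⬝ᵥ k) ≤ |y ⬝ᵥ k| := larc_le_abs _
        _ ≤ ℓ y * D := hCS y
        _ = D * ℓ y := mul_comm _ _
    have hbdd2 : BddAbove (Set.range fun y : {y : Fin n → ℝ // y ≠ 0} =>
        larc ((y : Fin n → ℝ) ⬝ᵥ k) / ℓ (y : Fin n → ℝ)) := by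
      refine ⟨D, ?_⟩; rintro v ⟨y, rfl⟩; exact hub2 y
    have hval2 : larc ((⟨x₀, hx₀ne⟩ : {y : Fin n → ℝ // y ≠ 0}) ⬝ᵥ k) / ℓ x₀ = D := by
      show larc (x₀ ⬝ᵥ k) / ℓ x₀ = D
      rw [hlarcπ, hℓx₀, hratio]
    haveI : Nonempty {y : Fin n → ℝ // y ≠ 0} := ⟨⟨x₀, hx₀ne⟩⟩
    have hS2 : (⨆ y : {y : Fin n → ℝ // y ≠ 0},
        larc ((y : Fin n → ℝ) ⬝ᵥ k) / ℓ (y : Fin n → ℝ)) = D := by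
      refine le_antisymm (ciSup_le hub2) ?_
      exact hval2.symm.le.trans (le_ciSup hbdd2 ⟨x₀, hx₀ne⟩)
    -- torus side
    have hqlnn : ∀ x : Fin n → ℝ, 0 ≤ ql x :=
      fun x => le_ciInf fun l => Real.sqrt_nonneg _
    have hqlbb : ∀ x : Fin n → ℝ,
        BddBelow (Set.range fun l : Λ => ℓ (x + (l : Fin n → ℝ))) := by
      intro x; refine ⟨0, ?_⟩; rintro v ⟨l, rfl⟩; exact Real.sqrt_nonneg _
    have hqle : ∀ x : Fin n → ℝ, ql x ≤ ℓ x := by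
      intro x
      have := ciInf_le (hqlbb x) (⟨0, Λ.zero_mem⟩ : Λ)
      simpa using this
    have hlarc_shift : ∀ (x : Fin n → ℝ) (l : Λ),
        larc ((x + (l : Fin n → ℝ)) ⬝ᵥ k) = larc (x ⬝ᵥ k) := by
      intro x l
      obtain ⟨m, hm⟩ := hk l l.2
      rw [add_dotProduct, hm, larc_add]
    have hub1 : ∀ x : {x : Fin n → ℝ // ql x ≠ 0},
        larc ((x : Fin n → ℝ) ⬝ᵥ k) / ql (x : Fin n → ℝ) ≤ D := by
      rintro ⟨x, hx⟩
      have hqpos : 0 < ql x := lt_of_le_of_ne (hqlnn x) (Ne.symm hx)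
      show larc (x ⬝ᵥ k) / ql x ≤ D
      rw [div_le_iff₀ hqpos]
      have key : larc (x ⬝ᵥ k) / D ≤ ql x := by
        refine le_ciInf fun l => ?_
        rw [div_le_iff₀ hDpos, ← hlarc_shift x l]
        calc larc ((x + (l : Fin n → ℝ)) ⬝ᵥ k) ≤ |(x + (l : Fin n → ℝ)) ⬝ᵥ k| := larc_le_abs _
          _ ≤ ℓ (x + (l : Fin n → ℝ)) * D := hCS _
      rw [div_le_iff₀ hDpos] at key
      nlinarith
    have hql_x₀ : ql x₀ = t * D := by
      refine le_antisymm ((hqle x₀).trans_eq hℓx₀) (le_ciInf fun l => ?_)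
      obtain ⟨m, hm⟩ := hk l l.2
      have habs : Real.pi ≤ |(x₀ + (l : Fin n → ℝ)) ⬝ᵥ k| := by
        rw [add_dotProduct, hx₀k, hm]
        have hodd : (1:ℝ) ≤ |1 + 2 * (m:ℝ)| := by
          have : (1:ℤ) ≤ |1 + 2 * m| := by
            rcases le_or_gt 0 m with h | h
            · rw [abs_of_nonneg] <;> omega
            · rw [abs_of_nonpos] <;> omega
          calc (1:ℝ) = ((1:ℤ):ℝ) := by norm_num
            _ ≤ ((|1 + 2*m| : ℤ) : ℝ) := by exact_mod_cast this
            _ = |1 + 2 * (m:ℝ)| := by push_cast; ring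
        have : Real.pi + 2 * Real.pi * (m:ℝ) = Real.pi * (1 + 2 * (m:ℝ)) := by ring
        rw [this, abs_mul, abs_of_pos Real.pi_pos]
        nlinarith [Real.pi_pos]
      have := (habs.trans (hCS (x₀ + (l : Fin n → ℝ))))
      rw [htD, div_le_iff₀ hDpos]
      nlinarith
    have hql_x₀ne : ql x₀ ≠ 0 := by rw [hql_x₀]; positivity
    have hval1 : larc (x₀ ⬝ᵥ k) / ql x₀ = D := by
      rw [hlarcπ, hql_x₀, hratio]
    have hbdd1 : BddAbove (Set.range fun x : {x : Fin n → ℝ // ql x ≠ 0} =>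
        larc ((x : Fin n → ℝ) ⬝ᵥ k) / ql (x : Fin n → ℝ)) := by
      refine ⟨D, ?_⟩; rintro v ⟨x, rfl⟩; exact hub1 x
    haveI : Nonempty {x : Fin n → ℝ // ql x ≠ 0} := ⟨⟨x₀, hql_x₀ne⟩⟩
    have hS1 : (⨆ x : {x : Fin n → ℝ // ql x ≠ 0},
        larc ((x : Fin n → ℝ) ⬝ᵥ k) / ql (x : Fin n → ℝ)) = D := by
      refine le_antisymm (ciSup_le hub1) ?_
      exact hval1.symm.le.trans (le_ciSup hbdd1 ⟨x₀, hql_x₀ne⟩)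
    exact ⟨hS1.trans hS2.symm, hS2⟩
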